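/- Let X and Y be Hausdorff topological spaces and (X_j)_{j ∈ J} a family of subsets of X whose interiors cover X. Then the restriction map ρ : C(X,Y) → ∏_{j ∈ J} C(X_j,Y), γ ↦ (γ|_{X_j})_{j ∈ J}, is a topological embedding with closed image, where all function spaces carry the compact-open topology and the product carries the product topology. -/

import Mathlib

open Topology

/-- **Gluing lemma for the compact-open topology** (Lemma `coveremb`).
Let `X`, `Y` be Hausdorff spaces and `(X_j)` a family of subsets of `X` whose interiors
cover `X`.  Then the restriction map `C(X,Y) → ∏_j C(X_j,Y)` is a topological embedding
with closed image (compact-open topologies throughout). -/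
theorem restriction_isEmbedding_isClosed_range
    {X Y : Type*} [TopologicalSpace X] [TopologicalSpace Y] [T2Space X] [T2Space Y]
    {J : Type*} (Xs : J → Set X) (hcov : ∀ x : X, ∃ j, x ∈ interior (Xs j)) :
    IsEmbedding (fun (γ : C(X, Y)) (j : J) => γ.restrict (Xs j)) ∧
      IsClosed (Set.range (fun (γ : C(X, Y)) (j : J) => γ.restrict (Xs j))) := by
  classical
  set ρ := fun (γ : C(X, Y)) (j : J) => γ.restrict (Xs j) with hρ
  have hcont : Continuous ρ :=
    continuous_pi fun j => ContinuousMap.continuous_restrict (Xs j)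
  -- Injectivity
  have hinj : Function.Injective ρ := by
    intro γ₁ γ₂ h
    ext x
    obtain ⟨j, hj⟩ := hcov x
    exact ContinuousMap.congr_fun (congrFun h j) ⟨x, interior_subset hj⟩
  -- Inducing
  have hle : (TopologicalSpace.induced ρ Pi.topologicalSpace) ≤
      (ContinuousMap.compactOpen : TopologicalSpace C(X, Y)) := by
    rw [ContinuousMap.compactOpen_eq]
    refine le_generateFrom ?_
    rintro s ⟨K, hK, U, hU, rfl⟩
    -- finite subcover of K by the interiors
    obtain ⟨t, ht⟩ := hK.elim_finite_subcover (fun j => interior (Xs j))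
      (fun j => isOpen_interior) (fun x _ => Set.mem_iUnion.2 (hcov x))
    obtain ⟨Ks, hKsc, hKssub, hKeq⟩ :=
      hK.finite_compact_cover t (fun j => interior (Xs j)) (fun _ _ => isOpen_interior) ht
    have hKsXs : ∀ i, Ks i ⊆ Xs i := fun i => (hKssub i).trans interior_subset
    -- each piece as a compact subset of the subspace `Xs i`
    have hKi' : ∀ i, IsCompact ((Subtype.val ⁻¹' Ks i : Set (Xs i))) := by
      intro i
      rw [Subtype.isCompact_iff, Subtype.image_preimage_coe,
        Set.inter_eq_right.mpr (hKsXs i)]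
      exact hKsc i
    rw [isOpen_induced_iff]
    refine ⟨⋂ i ∈ t, (fun f : ∀ j, C(Xs j, Y) => f i) ⁻¹'
        {g | Set.MapsTo g (Subtype.val ⁻¹' Ks i) U}, ?_, ?_⟩
    · exact isOpen_biInter_finset fun i _ =>
        (ContinuousMap.isOpen_setOf_mapsTo (hKi' i) hU).preimage (continuous_apply i)
    · ext γ
      simp only [Set.mem_preimage, Set.mem_iInter, Set.mem_setOf_eq]
      constructor
      · rintro h x hx
        rw [hKeq] at hx
        simp only [Set.mem_iUnion] at hx
        obtain ⟨i, hit, hxi⟩ := hx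
        exact h i hit (show (⟨x, hKsXs i hxi⟩ : Xs i) ∈ Subtype.val ⁻¹' Ks i from hxi)
      · intro h i hit x hx
        have hxK : (x : X) ∈ K := hKeq ▸ Set.mem_biUnion hit hx
        exact h hxK
  have hind : Topology.IsInducing ρ :=
    ⟨le_antisymm (continuous_iff_le_induced.mp hcont) hle⟩
  refine ⟨⟨hind, hinj⟩, ?_⟩
  -- Closed range: the range is the set of compatible families
  have hrange : Set.range ρ = {f : ∀ j, C(Xs j, Y) |
      ∀ j k (x : X) (hj : x ∈ Xs j) (hk : x ∈ Xs k), f j ⟨x, hj⟩ = f k ⟨x, hk⟩} := by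
    ext f
    constructor
    · rintro ⟨γ, rfl⟩ j k x hj hk
      rfl
    · intro hf
      -- glue the family into one function
      have hsel : ∀ x : X, x ∈ Xs (hcov x).choose :=
        fun x => interior_subset (hcov x).choose_spec
      set g : X → Y := fun x => f (hcov x).choose ⟨x, hsel x⟩ with hg
      have hgagree : ∀ (j : J) (x : X) (hj : x ∈ Xs j), g x = f j ⟨x, hj⟩ :=
        fun j x hj => hf _ j x (hsel x) hj
      have hgc : Continuous g := by
        rw [continuous_iff_continuousAt]
        intro x
        obtain ⟨j, hj⟩ := hcov x
        refine ContinuousAt.congr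
          (f := fun y => if h : y ∈ Xs j then f j ⟨y, h⟩ else g y) ?_ ?_
        · -- continuity at x of the piecewise function, via continuity on the interior
          have hco : ContinuousOn (fun y => if h : y ∈ Xs j then f j ⟨y, h⟩ else g y)
              (interior (Xs j)) := by
            rw [continuousOn_iff_continuous_restrict]
            have : (interior (Xs j)).restrict
                (fun y => if h : y ∈ Xs j then f j ⟨y, h⟩ else g y) =
                (f j) ∘ Set.inclusion interior_subset := by
              funext y
              simp [Set.restrict, interior_subset y.2, Set.inclusion]
            rw [show (interior (Xs j)).domRestrict _ = _ from this]
            exact (f j).continuous.comp (continuous_inclusion interior_subset)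
          exact hco.continuousAt (isOpen_interior.mem_nhds hj)
        · filter_upwards [isOpen_interior.mem_nhds hj] with y hy
          simp [interior_subset hy, (hgagree j y (interior_subset hy)).symm]
      refine ⟨⟨g, hgc⟩, ?_⟩
      funext j
      ext x
      exact hgagree j x x.2
  rw [hrange]
  have : {f : ∀ j, C(Xs j, Y) |
      ∀ j k (x : X) (hj : x ∈ Xs j) (hk : x ∈ Xs k), f j ⟨x, hj⟩ = f k ⟨x, hk⟩} =
      ⋂ (j) (k) (x : X) (hj : x ∈ Xs j) (hk : x ∈ Xs k),
        {f : ∀ j, C(Xs j, Y) | f j ⟨x, hj⟩ = f k ⟨x, hk⟩} := by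
    ext f; simp [Set.mem_iInter]
  rw [this]
  refine isClosed_iInter fun j => isClosed_iInter fun k => isClosed_iInter fun x =>
    isClosed_iInter fun hj => isClosed_iInter fun hk => ?_
  exact isClosed_eq
    ((continuous_eval_const _).comp (continuous_apply j))
    ((continuous_eval_const _).comp (continuous_apply k))
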